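/- For every λ > 0 and every g ∈ P, the ℝ-linear map ψ : 𝔨 → 𝔤 defined by ψ(X) = g·φ_λ(X)·g⁻¹ satisfies: (i) ψ is injective and 𝔤 = ψ(𝔨) ⊕ 𝔭 as real vector spaces; (ii) ψ(X(0,z)) ∈ 𝔤⁻¹ for all z ∈ ℂ; (iii) the (1,0)-entry of ψ(J_λ(X(0,z))) equals i times the (1,0)-entry of ψ(X(0,z)) for all z ∈ ℂ; (iv) [ψ(X), ψ(Y)] - ψ([X,Y]) ∈ 𝔤¹ for all X, Y ∈ 𝔨, and [ψ(X), ψ(Y)] - ψ([X,Y]) = 0 whenever X, Y ∈ H_e. -/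

import Mathlib

open Matrix Complex

noncomputable section

/-- The 3×3 matrix J with J₀₂ = J₁₁ = J₂₀ = 1 and all other entries 0. -/
def Jm : Matrix (Fin 3) (Fin 3) ℂ := !![0,0,1;0,1,0;1,0,0]

/-- The real Lie algebra 𝔤 = su(2,1) = {A : Aᴴ·J + J·A = 0, tr A = 0}. -/
def su21 : Set (Matrix (Fin 3) (Fin 3) ℂ) :=
  {A | Aᴴ * Jm + Jm * A = 0 ∧ A.trace = 0}

/-- The real Lie algebra 𝔨 = su(2). -/
def su2 : Set (Matrix (Fin 2) (Fin 2) ℂ) :=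
  {X | Xᴴ = -X ∧ X.trace = 0}

/-- The element X(t,z) of su(2), with rows (i·t, -conj z) and (z, -i·t). -/
def Xk (t : ℝ) (z : ℂ) : Matrix (Fin 2) (Fin 2) ℂ :=
  !![Complex.I * t, -(starRingEnd ℂ) z; z, -(Complex.I * t)]

/-- The complex structure J_λ on H_e in terms of z = u+iv:
J_λ(X(0,u+iv)) = X(0, -(1/λ)·v + i·λ·u), so `Jl l z` is the new complex parameter. -/
def Jl (l : ℝ) (z : ℂ) : ℂ := ((-(z.im) / l : ℝ) : ℂ) + Complex.I * ((l * z.re : ℝ) : ℂ)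

/-- The matrix φ_λ(X(t,u+iv)) from Theorem 3.3 of the paper. -/
def phiE (l t u v : ℝ) : Matrix (Fin 3) (Fin 3) ℂ :=
  !![(((1+l^2)/(4*l) : ℝ) : ℂ) * (Complex.I * t),
     -((((5-3*l^2)/(4*Real.sqrt l)) : ℝ) : ℂ) * u
       - ((((3-5*l^2)/(4*l*Real.sqrt l)) : ℝ) : ℂ) * (Complex.I * v),
     ((((-15+34*l^2-15*l^4)/(16*l^2)) : ℝ) : ℂ) * (Complex.I * t);
     ((Real.sqrt l : ℝ) : ℂ) * u + (((1/Real.sqrt l) : ℝ) : ℂ) * (Complex.I * v),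
     -((((1+l^2)/(2*l)) : ℝ) : ℂ) * (Complex.I * t),
     ((((5-3*l^2)/(4*Real.sqrt l)) : ℝ) : ℂ) * u
       - ((((3-5*l^2)/(4*l*Real.sqrt l)) : ℝ) : ℂ) * (Complex.I * v);
     Complex.I * t,
     -((Real.sqrt l : ℝ) : ℂ) * u + (((1/Real.sqrt l) : ℝ) : ℂ) * (Complex.I * v),
     (((1+l^2)/(4*l) : ℝ) : ℂ) * (Complex.I * t)]

/-- The ℝ-linear map φ_λ, written as a map on 2×2 matrices: for X ∈ su(2) we have
X = X(t,z) with t = (X₀₀).im and z = X₁₀, and φ_λ(X(t,u+iv)) = `phiE l t u v`. -/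
def phiMap (l : ℝ) (X : Matrix (Fin 2) (Fin 2) ℂ) : Matrix (Fin 3) (Fin 3) ℂ :=
  phiE l (X 0 0).im (X 1 0).re (X 1 0).im

/-- 𝔭 = {A ∈ 𝔤 : A₁₀ = A₂₀ = A₂₁ = 0}. -/
def pSub : Set (Matrix (Fin 3) (Fin 3) ℂ) :=
  {A ∈ su21 | A 1 0 = 0 ∧ A 2 0 = 0 ∧ A 2 1 = 0}

/-- 𝔤⁻¹ = {A ∈ 𝔤 : A₂₀ = 0}. -/
def film1 : Set (Matrix (Fin 3) (Fin 3) ℂ) := {A ∈ su21 | A 2 0 = 0}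

/-- 𝔤¹ = {A ∈ 𝔤 : A₀₀ = A₁₁ = A₂₂ = A₁₀ = A₂₀ = A₂₁ = 0}. -/
def fil1 : Set (Matrix (Fin 3) (Fin 3) ℂ) :=
  {A ∈ su21 | A 0 0 = 0 ∧ A 1 1 = 0 ∧ A 2 2 = 0 ∧ A 1 0 = 0 ∧ A 2 0 = 0 ∧ A 2 1 = 0}

def e0 : Fin 3 → ℂ := ![1, 0, 0]

/-- The parabolic P : the stabilizer in SU(2,1) of the line ℂ·e₀. -/
def Pgrp : Set (Matrix (Fin 3) (Fin 3) ℂ) :=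
  {g | gᴴ * Jm * g = Jm ∧ g.det = 1 ∧ ∃ c : ℂ, g.mulVec e0 = c • e0}

/-- The composition ψ = Ad(g) ∘ φ_λ. -/
def psiMap (l : ℝ) (g : Matrix (Fin 3) (Fin 3) ℂ) (X : Matrix (Fin 2) (Fin 2) ℂ) :
    Matrix (Fin 3) (Fin 3) ℂ :=
  g * phiMap l X * g⁻¹


open Matrix Complex in
lemma su2_eq {X : Matrix (Fin 2) (Fin 2) ℂ} (hX : X ∈ su2) :
    X = Xk (X 0 0).im (X 1 0) := by
  obtain ⟨h1, h2⟩ := hX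
  rw [Matrix.trace_fin_two] at h2
  have h00 := congrFun (congrFun h1 0) 0
  have h01 := congrFun (congrFun h1 0) 1
  simp [Matrix.conjTranspose_apply] at h00 h01
  ext i j
  fin_cases i <;> fin_cases j <;> simp [Xk]
  · rw [Complex.ext_iff] at h00 ⊢
    constructor
    · have := h00.1; simp at this ⊢; linarith
    · simp
  · rw [h01]; ring
  · have : X 1 1 = -X 0 0 := by linear_combination h2
    rw [this, Complex.ext_iff] at *
    constructor
    · have := h00.1; simp at this ⊢; linarith
    · simp
open Matrix Complex in
lemma Xk_mem_su2 (t : ℝ) (z : ℂ) : Xk t z ∈ su2 := by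
  constructor
  · ext i j
    fin_cases i <;> fin_cases j <;>
      simp [Xk, Matrix.conjTranspose_apply, Complex.ext_iff]
  · simp [Xk, Matrix.trace_fin_two]

open Matrix Complex in
lemma phiMap_Xk (l t : ℝ) (z : ℂ) : phiMap l (Xk t z) = phiE l t z.re z.im := by
  simp [phiMap, Xk]

open Matrix Complex in
lemma comm_Xk (t t' : ℝ) (z z' : ℂ) :
    Xk t z * Xk t' z' - Xk t' z' * Xk t z
      = Xk (2*(z'.re*z.im - z.re*z'.im)) (2*Complex.I*((t':ℂ)*z - (t:ℂ)*z')) := by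
  ext i j
  fin_cases i <;> fin_cases j <;>
    simp [Xk, Matrix.mul_apply, Fin.sum_univ_two, Complex.ext_iff] <;>
      constructor <;> first | trivial | ring

open Matrix Complex in
lemma phiE_sq (s t u v : ℝ) (hs : 0 < s) :
    phiE (s^2) t u v =
    !![(((1+s^4)/(4*s^2) : ℝ) : ℂ) * (Complex.I * t),
       -((((5-3*s^4)/(4*s)) : ℝ) : ℂ) * u
         - ((((3-5*s^4)/(4*s^3)) : ℝ) : ℂ) * (Complex.I * v),
       ((((-15+34*s^4-15*s^8)/(16*s^4)) : ℝ) : ℂ) * (Complex.I * t);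
       ((s : ℝ) : ℂ) * u + (((1/s) : ℝ) : ℂ) * (Complex.I * v),
       -((((1+s^4)/(2*s^2)) : ℝ) : ℂ) * (Complex.I * t),
       ((((5-3*s^4)/(4*s)) : ℝ) : ℂ) * u
         - ((((3-5*s^4)/(4*s^3)) : ℝ) : ℂ) * (Complex.I * v);
       Complex.I * t,
       -((s : ℝ) : ℂ) * u + (((1/s) : ℝ) : ℂ) * (Complex.I * v),
       (((1+s^4)/(4*s^2) : ℝ) : ℂ) * (Complex.I * t)] := by
  unfold phiE
  rw [Real.sqrt_sq hs.le]
  norm_num [pow_succ]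
  ring_nf
  simp
open Matrix Complex
set_option maxHeartbeats 1000000 in
lemma phiE_mem_su21 (l t u v : ℝ) : phiE l t u v ∈ su21 := by
  refine ⟨?_, ?_⟩
  · ext i j
    fin_cases i <;> fin_cases j <;>
      (simp [phiE, Jm, Matrix.mul_apply, Fin.sum_univ_three, Matrix.vecHead,
        Matrix.vecTail, Matrix.conjTranspose_apply, map_ofNat, -mul_eq_zero];
       try ring)
  · simp [phiE, Jm, Matrix.trace_fin_three]
    ring

open Matrix Complex
set_option maxHeartbeats 2000000 in
lemma phiE_He (s : ℝ) (hs : 0 < s) (u v u' v' : ℝ) :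
    phiE (s^2) 0 u v * phiE (s^2) 0 u' v' - phiE (s^2) 0 u' v' * phiE (s^2) 0 u v
      = phiE (s^2) (2*(u'*v - u*v')) 0 0 := by
  have hs0 : s ≠ 0 := ne_of_gt hs
  rw [phiE_sq _ _ _ _ hs, phiE_sq _ _ _ _ hs, phiE_sq _ _ _ _ hs]
  ext i j
  fin_cases i <;> fin_cases j <;>
    (simp [Matrix.mul_apply, Fin.sum_univ_three, Matrix.vecHead, Matrix.vecTail,
      Complex.ext_iff, -mul_eq_zero,
      -Complex.ofReal_div, -Complex.ofReal_inv, -Complex.ofReal_pow, -Complex.ofReal_mul,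
      -Complex.ofReal_sub, -Complex.ofReal_add, -Complex.ofReal_neg, -Complex.ofReal_ofNat];
     try (constructor <;> (field_simp; try ring)))

open Matrix Complex
set_option maxHeartbeats 4000000 in
lemma phiE_defect (s : ℝ) (hs : 0 < s) (t u v t' u' v' : ℝ) (i j : Fin 3)
    (hij : j < i ∨ i = j) :
    (phiE (s^2) t u v * phiE (s^2) t' u' v' - phiE (s^2) t' u' v' * phiE (s^2) t u v
      - phiE (s^2) (2*(u'*v - u*v')) (-2*(t'*v - t*v')) (2*(t'*u - t*u'))) i j = 0 := by
  have hs0 : s ≠ 0 := ne_of_gt hs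
  rw [phiE_sq _ _ _ _ hs, phiE_sq _ _ _ _ hs, phiE_sq _ _ _ _ hs]
  fin_cases i <;> fin_cases j <;>
    first
    | exact absurd hij (by decide)
    | (simp [Matrix.mul_apply, Fin.sum_univ_three, Matrix.vecHead, Matrix.vecTail,
        Complex.ext_iff, -mul_eq_zero,
        -Complex.ofReal_div, -Complex.ofReal_inv, -Complex.ofReal_pow, -Complex.ofReal_mul,
        -Complex.ofReal_sub, -Complex.ofReal_add, -Complex.ofReal_neg, -Complex.ofReal_ofNat];
       try (constructor <;> (field_simp; try ring)))

open Matrix Complex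

lemma su21_sub {A B : Matrix (Fin 3) (Fin 3) ℂ} (hA : A ∈ su21) (hB : B ∈ su21) :
    A - B ∈ su21 := by
  obtain ⟨hA1, hA2⟩ := hA; obtain ⟨hB1, hB2⟩ := hB
  constructor
  · rw [Matrix.conjTranspose_sub, Matrix.sub_mul, Matrix.mul_sub]
    rw [show Aᴴ * Jm - Bᴴ * Jm + (Jm * A - Jm * B)
      = (Aᴴ * Jm + Jm * A) - (Bᴴ * Jm + Jm * B) by abel, hA1, hB1, sub_zero]
  · rw [Matrix.trace_sub, hA2, hB2, sub_zero]

lemma su21_comm {A B : Matrix (Fin 3) (Fin 3) ℂ} (hA : A ∈ su21) (hB : B ∈ su21) :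
    A * B - B * A ∈ su21 := by
  obtain ⟨hA1, hA2⟩ := hA; obtain ⟨hB1, hB2⟩ := hB
  have hA1' : Aᴴ * Jm = -(Jm * A) := by linear_combination (norm := noncomm_ring) hA1
  have hB1' : Bᴴ * Jm = -(Jm * B) := by linear_combination (norm := noncomm_ring) hB1
  constructor
  · rw [Matrix.conjTranspose_sub, Matrix.conjTranspose_mul, Matrix.conjTranspose_mul]
    have e1 : (Bᴴ * Aᴴ - Aᴴ * Bᴴ) * Jm = Bᴴ * (Aᴴ * Jm) - Aᴴ * (Bᴴ * Jm) := by
      noncomm_ring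
    rw [e1, hA1', hB1']
    have e2 : Bᴴ * -(Jm * A) = -(Bᴴ * Jm) * A := by noncomm_ring
    have e3 : Aᴴ * -(Jm * B) = -(Aᴴ * Jm) * B := by noncomm_ring
    rw [e2, e3, hA1', hB1']
    noncomm_ring
  · rw [Matrix.trace_sub, Matrix.trace_mul_comm, sub_self]

lemma ad_mem {h A : Matrix (Fin 3) (Fin 3) ℂ} (hJ : hᴴ * Jm * h = Jm)
    (hdet : IsUnit h.det) (hA : A ∈ su21) : h * A * h⁻¹ ∈ su21 := by
  obtain ⟨h1, h2⟩ := hA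
  have hdetH : IsUnit hᴴ.det := by
    rw [Matrix.det_conjTranspose]; exact hdet.star
  have e1 : hᴴ * Jm = Jm * h⁻¹ := by
    have := congrArg (· * h⁻¹) hJ
    simpa [Matrix.mul_assoc, Matrix.mul_nonsing_inv _ hdet] using this
  have e2 : Jm * h = (hᴴ)⁻¹ * Jm := by
    have := congrArg ((hᴴ)⁻¹ * ·) hJ
    simpa [← Matrix.mul_assoc, Matrix.nonsing_inv_mul _ hdetH] using this
  constructor
  · have t1 : (h * A * h⁻¹)ᴴ * Jm = (hᴴ)⁻¹ * (Aᴴ * Jm) * h⁻¹ := by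
      rw [Matrix.conjTranspose_mul, Matrix.conjTranspose_mul,
        Matrix.conjTranspose_nonsing_inv]
      simp only [Matrix.mul_assoc]
      rw [e1]
    have t2 : Jm * (h * A * h⁻¹) = (hᴴ)⁻¹ * (Jm * A) * h⁻¹ := by
      simp only [← Matrix.mul_assoc]
      rw [e2]
    rw [t1, t2, ← Matrix.add_mul, ← Matrix.mul_add, h1]
    simp
  · rw [Matrix.trace_mul_cycle, Matrix.nonsing_inv_mul _ hdet, Matrix.one_mul, h2]

lemma bt_of_entries {C : Matrix (Fin 3) (Fin 3) ℂ} (h10 : C 1 0 = 0) (h20 : C 2 0 = 0)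
    (h21 : C 2 1 = 0) : C.BlockTriangular id := by
  intro i j hij
  fin_cases i <;> fin_cases j <;>
    first
    | exact absurd hij (by decide)
    | assumption

lemma Pgrp_entries {g : Matrix (Fin 3) (Fin 3) ℂ} (hg : g ∈ Pgrp) :
    g 1 0 = 0 ∧ g 2 0 = 0 ∧ g 2 1 = 0 := by
  obtain ⟨hJ, hdet, c, hc⟩ := hg
  have h10 : g 1 0 = 0 := by
    have := congrFun hc 1
    simpa [Matrix.mulVec, dotProduct, e0, Fin.sum_univ_three] using this
  have h20 : g 2 0 = 0 := by
    have := congrFun hc 2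
    simpa [Matrix.mulVec, dotProduct, e0, Fin.sum_univ_three] using this
  have h00 : g 0 0 ≠ 0 := by
    intro h
    rw [Matrix.det_fin_three] at hdet
    rw [h, h10, h20] at hdet
    simp at hdet
  have h21 : g 2 1 = 0 := by
    have := congrFun (congrFun hJ 0) 1
    simp [Jm, Matrix.mul_apply, Fin.sum_univ_three, Matrix.conjTranspose_apply,
      Matrix.vecHead, Matrix.vecTail, h10, h20] at this
    rcases this with h | h
    · exact absurd h h00
    · exact h
  exact ⟨h10, h20, h21⟩

open Matrix Complex

lemma conj_entry20 {g A gi : Matrix (Fin 3) (Fin 3) ℂ}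
    (hg10 : g 1 0 = 0) (hg20 : g 2 0 = 0) (hg21 : g 2 1 = 0)
    (hi10 : gi 1 0 = 0) (hi20 : gi 2 0 = 0) (hi21 : gi 2 1 = 0) :
    (g * A * gi) 2 0 = g 2 2 * A 2 0 * gi 0 0 := by
  simp [Matrix.mul_apply, Fin.sum_univ_three, hg10, hg20, hg21, hi10, hi20, hi21]

lemma conj_entry10 {g A gi : Matrix (Fin 3) (Fin 3) ℂ}
    (hg10 : g 1 0 = 0) (hg20 : g 2 0 = 0) (hg21 : g 2 1 = 0)
    (hi10 : gi 1 0 = 0) (hi20 : gi 2 0 = 0) (hi21 : gi 2 1 = 0) :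
    (g * A * gi) 1 0 = (g 1 1 * A 1 0 + g 1 2 * A 2 0) * gi 0 0 := by
  simp [Matrix.mul_apply, Fin.sum_univ_three, hg10, hg20, hg21, hi10, hi20, hi21]
  try ring

lemma conj_entry21 {g A gi : Matrix (Fin 3) (Fin 3) ℂ}
    (hg10 : g 1 0 = 0) (hg20 : g 2 0 = 0) (hg21 : g 2 1 = 0)
    (hi10 : gi 1 0 = 0) (hi20 : gi 2 0 = 0) (hi21 : gi 2 1 = 0) :
    (g * A * gi) 2 1 = g 2 2 * (A 2 0 * gi 0 1 + A 2 1 * gi 1 1) := by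
  simp [Matrix.mul_apply, Fin.sum_univ_three, hg10, hg20, hg21, hi10, hi20, hi21]
  try ring

lemma conj_cancel₁ {g : Matrix (Fin 3) (Fin 3) ℂ} (hdet : IsUnit g.det)
    (M : Matrix (Fin 3) (Fin 3) ℂ) : g⁻¹ * (g * M * g⁻¹) * g = M := by
  rw [Matrix.mul_assoc g M g⁻¹, ← Matrix.mul_assoc g⁻¹ g _,
    Matrix.nonsing_inv_mul _ hdet, Matrix.one_mul, Matrix.mul_assoc,
    Matrix.nonsing_inv_mul _ hdet, Matrix.mul_one]

lemma conj_cancel₂ {g : Matrix (Fin 3) (Fin 3) ℂ} (hdet : IsUnit g.det)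
    (M : Matrix (Fin 3) (Fin 3) ℂ) : g * (g⁻¹ * M * g) * g⁻¹ = M := by
  rw [Matrix.mul_assoc g⁻¹ M g, ← Matrix.mul_assoc g g⁻¹ _,
    Matrix.mul_nonsing_inv _ hdet, Matrix.one_mul, Matrix.mul_assoc,
    Matrix.mul_nonsing_inv _ hdet, Matrix.mul_one]

lemma phiE_entry20 (l t u v : ℝ) : phiE l t u v 2 0 = Complex.I * t := by
  simp [phiE]

lemma phiE_entry10 (l t u v : ℝ) :
    phiE l t u v 1 0 = (Real.sqrt l : ℂ) * u + ((1/Real.sqrt l : ℝ) : ℂ) * (Complex.I * v) := by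
  simp [phiE]

lemma phiE_entry21 (l t u v : ℝ) :
    phiE l t u v 2 1 = -(Real.sqrt l : ℂ) * u + ((1/Real.sqrt l : ℝ) : ℂ) * (Complex.I * v) := by
  simp [phiE]

lemma phiE_inj {l : ℝ} (hl : 0 < l) {t u v t' u' v' : ℝ}
    (h20 : phiE l t u v 2 0 = phiE l t' u' v' 2 0)
    (h10 : phiE l t u v 1 0 = phiE l t' u' v' 1 0) :
    t = t' ∧ u = u' ∧ v = v' := by
  have hs : Real.sqrt l ≠ 0 := (Real.sqrt_pos.mpr hl).ne'
  rw [phiE_entry20, phiE_entry20] at h20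
  rw [phiE_entry10, phiE_entry10] at h10
  have ht : t = t' := by
    have := mul_left_cancel₀ Complex.I_ne_zero h20
    exact_mod_cast this
  rw [Complex.ext_iff] at h10
  simp at h10
  obtain ⟨hu, hv⟩ := h10
  exact ⟨ht, hu.resolve_right hs, hv.resolve_right hs⟩

lemma su21_entry20 {B : Matrix (Fin 3) (Fin 3) ℂ} (hB : B ∈ su21) :
    B 2 0 = Complex.I * (B 2 0).im := by
  have := congrFun (congrFun hB.1 0) 0
  simp [Jm, Matrix.mul_apply, Fin.sum_univ_three, Matrix.conjTranspose_apply,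
    Matrix.vecHead, Matrix.vecTail, Matrix.vecMul, dotProduct] at this
  rw [Complex.ext_iff] at this ⊢
  simp at this ⊢
  exact this

lemma su21_entry21 {B : Matrix (Fin 3) (Fin 3) ℂ} (hB : B ∈ su21) :
    B 2 1 = -(starRingEnd ℂ) (B 1 0) := by
  have := congrFun (congrFun hB.1 1) 0
  simp [Jm, Matrix.mul_apply, Fin.sum_univ_three, Matrix.conjTranspose_apply,
    Matrix.vecHead, Matrix.vecTail, Matrix.vecMul, dotProduct] at this
  rw [Complex.ext_iff] at this ⊢
  simp at this ⊢
  constructor <;> linarith [this.1, this.2]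

open Matrix Complex

lemma conj_mul3 {g : Matrix (Fin 3) (Fin 3) ℂ} (hdu : IsUnit g.det)
    (A B : Matrix (Fin 3) (Fin 3) ℂ) :
    (g * A * g⁻¹) * (g * B * g⁻¹) = g * (A * B) * g⁻¹ := by
  calc (g * A * g⁻¹) * (g * B * g⁻¹) = g * A * (g⁻¹ * g) * B * g⁻¹ := by
        simp only [Matrix.mul_assoc]
    _ = g * (A * B) * g⁻¹ := by
        rw [Matrix.nonsing_inv_mul _ hdu, Matrix.mul_one]
        simp only [Matrix.mul_assoc]

lemma conj_sub (g gi A B : Matrix (Fin 3) (Fin 3) ℂ) :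
    g * (A - B) * gi = g * A * gi - g * B * gi := by
  rw [Matrix.mul_sub, Matrix.sub_mul]

lemma conj_add (g gi A B : Matrix (Fin 3) (Fin 3) ℂ) :
    g * (A + B) * gi = g * A * gi + g * B * gi := by
  rw [Matrix.mul_add, Matrix.add_mul]

lemma conj_strict_upper {g D gi : Matrix (Fin 3) (Fin 3) ℂ}
    (hg10 : g 1 0 = 0) (hg20 : g 2 0 = 0) (hg21 : g 2 1 = 0)
    (hi10 : gi 1 0 = 0) (hi20 : gi 2 0 = 0) (hi21 : gi 2 1 = 0)
    (hD : ∀ i j : Fin 3, j < i ∨ i = j → D i j = 0)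
    (i j : Fin 3) (hij : j < i ∨ i = j) : (g * D * gi) i j = 0 := by
  have d00 := hD 0 0 (Or.inr rfl)
  have d11 := hD 1 1 (Or.inr rfl)
  have d22 := hD 2 2 (Or.inr rfl)
  have d10 := hD 1 0 (Or.inl (by decide))
  have d20 := hD 2 0 (Or.inl (by decide))
  have d21 := hD 2 1 (Or.inl (by decide))
  fin_cases i <;> fin_cases j <;>
    first
    | exact absurd hij (by decide)
    | simp [Matrix.mul_apply, Fin.sum_univ_three, hg10, hg20, hg21,
        hi10, hi20, hi21, d00, d11, d22, d10, d20, d21]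

open Matrix Complex

set_option maxHeartbeats 2000000 in
/-- for g ∈ P, the map ψ = Ad(g) ∘ φ_λ has the four properties of
Theorem 3.3 of the paper. -/
theorem stmt17 (l : ℝ) (hl : 0 < l) (g : Matrix (Fin 3) (Fin 3) ℂ) (hg : g ∈ Pgrp) :
    ((∀ X ∈ su2, ∀ Y ∈ su2, psiMap l g X = psiMap l g Y → X = Y) ∧
      (∀ A ∈ su21, ∃! q : su2 × pSub,
        A = psiMap l g (q.1 : Matrix (Fin 2) (Fin 2) ℂ) + (q.2 : Matrix (Fin 3) (Fin 3) ℂ))) ∧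
    (∀ z : ℂ, psiMap l g (Xk 0 z) ∈ film1) ∧
    (∀ z : ℂ,
      (psiMap l g (Xk 0 (Jl l z))) 1 0 = Complex.I * (psiMap l g (Xk 0 z)) 1 0) ∧
    (∀ X ∈ su2, ∀ Y ∈ su2,
      psiMap l g X * psiMap l g Y - psiMap l g Y * psiMap l g X
        - psiMap l g (X * Y - Y * X) ∈ fil1) ∧
    (∀ z z' : ℂ,
      psiMap l g (Xk 0 z) * psiMap l g (Xk 0 z')
        - psiMap l g (Xk 0 z') * psiMap l g (Xk 0 z)
        - psiMap l g (Xk 0 z * Xk 0 z' - Xk 0 z' * Xk 0 z) = 0) := by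
  -- basic facts about g
  have hJg : gᴴ * Jm * g = Jm := hg.1
  have hdet1 : g.det = 1 := hg.2.1
  have hdu : IsUnit g.det := by rw [hdet1]; exact isUnit_one
  have hdetH : IsUnit gᴴ.det := by rw [Matrix.det_conjTranspose]; exact hdu.star
  obtain ⟨h10, h20, h21⟩ := Pgrp_entries hg
  have btg : g.BlockTriangular id := bt_of_entries h10 h20 h21
  haveI : Invertible g := g.invertibleOfIsUnitDet hdu
  have btgi : (g⁻¹).BlockTriangular id := blockTriangular_inv_of_blockTriangular btg
  have i10 : g⁻¹ 1 0 = 0 := btgi (show (id (0:Fin 3)) < id 1 by decide)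
  have i20 : g⁻¹ 2 0 = 0 := btgi (show (id (0:Fin 3)) < id 2 by decide)
  have i21 : g⁻¹ 2 1 = 0 := btgi (show (id (1:Fin 3)) < id 2 by decide)
  have hJgi : (g⁻¹)ᴴ * Jm * g⁻¹ = Jm := by
    rw [Matrix.conjTranspose_nonsing_inv]
    conv_lhs => rw [← hJg]
    simp only [← Matrix.mul_assoc]
    rw [Matrix.nonsing_inv_mul _ hdetH, Matrix.one_mul, Matrix.mul_assoc,
      Matrix.mul_nonsing_inv _ hdu, Matrix.mul_one]
  -- sqrt facts
  set s := Real.sqrt l with hsdef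
  have hs0 : 0 < s := Real.sqrt_pos.mpr hl
  have hsne : s ≠ 0 := hs0.ne'
  have hls : l = s ^ 2 := (Real.sq_sqrt hl.le).symm
  -- phiE facts specialized to l
  have He : ∀ u v u' v' : ℝ,
      phiE l 0 u v * phiE l 0 u' v' - phiE l 0 u' v' * phiE l 0 u v
        = phiE l (2*(u'*v - u*v')) 0 0 := by
    intro u v u' v'
    rw [hls]; exact phiE_He s hs0 u v u' v'
  have Dlem : ∀ t u v t' u' v' : ℝ, ∀ i j : Fin 3, j < i ∨ i = j →
      (phiE l t u v * phiE l t' u' v' - phiE l t' u' v' * phiE l t u v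
        - phiE l (2*(u'*v - u*v')) (-2*(t'*v - t*v')) (2*(t'*u - t*u'))) i j = 0 := by
    intro t u v t' u' v' i j hij
    rw [hls]; exact phiE_defect s hs0 t u v t' u' v' i j hij
  have phimem : ∀ X : Matrix (Fin 2) (Fin 2) ℂ, phiMap l X ∈ su21 := by
    intro X; exact phiE_mem_su21 l _ _ _
  -- the key conjugation identity for brackets
  have br_eq : ∀ X Y : Matrix (Fin 2) (Fin 2) ℂ,
      psiMap l g X * psiMap l g Y - psiMap l g Y * psiMap l g X
        - psiMap l g (X * Y - Y * X)
      = g * (phiMap l X * phiMap l Y - phiMap l Y * phiMap l X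
          - phiMap l (X * Y - Y * X)) * g⁻¹ := by
    intro X Y
    unfold psiMap
    rw [conj_mul3 hdu, conj_mul3 hdu, conj_sub, conj_sub]
  -- the commutator image
  have commφ : ∀ (t t' : ℝ) (z z' : ℂ),
      phiMap l (Xk t z * Xk t' z' - Xk t' z' * Xk t z)
        = phiE l (2*(z'.re*z.im - z.re*z'.im)) (-2*(t'*z.im - t*z'.im))
            (2*(t'*z.re - t*z'.re)) := by
    intro t t' z z'
    rw [comm_Xk, phiMap_Xk]
    have e1 : (2*Complex.I*((t':ℂ)*z - (t:ℂ)*z')).re = -2*(t'*z.im - t*z'.im) := by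
      simp
      try ring
    have e2 : (2*Complex.I*((t':ℂ)*z - (t:ℂ)*z')).im = 2*(t'*z.re - t*z'.re) := by
      simp
      try ring
    rw [e1, e2]
  refine ⟨⟨?_, ?_⟩, ?_, ?_, ?_, ?_⟩
  · -- injectivity
    intro X hX Y hY h
    have hφ : phiMap l X = phiMap l Y := by
      have := congrArg (fun M => g⁻¹ * M * g) h
      simpa [psiMap, conj_cancel₁ hdu] using this
    unfold phiMap at hφ
    obtain ⟨ht, hu, hv⟩ := phiE_inj hl (congrFun (congrFun hφ 2) 0)
      (congrFun (congrFun hφ 1) 0)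
    have hz : X 1 0 = Y 1 0 := Complex.ext hu hv
    rw [su2_eq hX, su2_eq hY, ht, hz]
  · -- decomposition
    intro A hA
    set B := g⁻¹ * A * g with hBdef
    have hdui : IsUnit (g⁻¹).det := by
      rw [Matrix.det_nonsing_inv, hdet1]; simp
    have hBmem : B ∈ su21 := by
      have h1 : (g⁻¹)⁻¹ = g := Matrix.nonsing_inv_nonsing_inv g hdu
      have := ad_mem hJgi hdui hA
      rwa [h1] at this
    set t : ℝ := (B 2 0).im with htdef
    set u : ℝ := (B 1 0).re / s with hudef
    set v : ℝ := s * (B 1 0).im with hvdef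
    set z : ℂ := (u:ℂ) + (v:ℂ) * Complex.I with hzdef
    have hzre : z.re = u := by simp [hzdef]
    have hzim : z.im = v := by simp [hzdef]
    have hφX : phiMap l (Xk t z) = phiE l t u v := by
      rw [phiMap_Xk, hzre, hzim]
    have e20 : phiE l t u v 2 0 = B 2 0 := by
      rw [phiE_entry20]; exact (su21_entry20 hBmem).symm
    have e10 : phiE l t u v 1 0 = B 1 0 := by
      rw [phiE_entry10, ← hsdef, Complex.ext_iff]
      constructor <;>
        simp [hudef, hvdef, -Complex.ofReal_div, -Complex.ofReal_inv,
          -Complex.ofReal_pow, -Complex.ofReal_mul, -Complex.ofReal_sub,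
          -Complex.ofReal_add, -Complex.ofReal_neg, -Complex.ofReal_ofNat] <;>
        field_simp
    have e21 : phiE l t u v 2 1 = B 2 1 := by
      rw [phiE_entry21, ← hsdef, su21_entry21 hBmem, Complex.ext_iff]
      constructor <;>
        simp [hudef, hvdef, -Complex.ofReal_div, -Complex.ofReal_inv,
          -Complex.ofReal_pow, -Complex.ofReal_mul, -Complex.ofReal_sub,
          -Complex.ofReal_add, -Complex.ofReal_neg, -Complex.ofReal_ofNat] <;>
        field_simp
    have hgBg : g * B * g⁻¹ = A := conj_cancel₂ hdu A
    have hQeq : A - psiMap l g (Xk t z) = g * (B - phiE l t u v) * g⁻¹ := by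
      rw [conj_sub, hgBg]
      unfold psiMap
      rw [hφX]
    have hC10 : (B - phiE l t u v) 1 0 = 0 := by
      simp [Matrix.sub_apply, e10]
    have hC20 : (B - phiE l t u v) 2 0 = 0 := by
      simp [Matrix.sub_apply, e20]
    have hC21 : (B - phiE l t u v) 2 1 = 0 := by
      simp [Matrix.sub_apply, e21]
    have hQmem : A - psiMap l g (Xk t z) ∈ pSub := by
      refine ⟨su21_sub hA (ad_mem hJg hdu (phimem _)), ?_, ?_, ?_⟩
      · rw [hQeq, conj_entry10 h10 h20 h21 i10 i20 i21, hC10, hC20]; ring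
      · rw [hQeq, conj_entry20 h10 h20 h21 i10 i20 i21, hC20]; ring
      · rw [hQeq, conj_entry21 h10 h20 h21 i10 i20 i21, hC20, hC21]; ring
    refine ⟨(⟨Xk t z, Xk_mem_su2 t z⟩, ⟨A - psiMap l g (Xk t z), hQmem⟩), by noncomm_ring, ?_⟩
    rintro ⟨⟨X', hX'⟩, ⟨Q', hQ'⟩⟩ heq
    simp only at heq
    -- show X' = Xk t z
    have hC'10 : (g⁻¹ * Q' * g) 1 0 = 0 := by
      rw [conj_entry10 i10 i20 i21 h10 h20 h21, hQ'.2.1, hQ'.2.2.1]; ring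
    have hC'20 : (g⁻¹ * Q' * g) 2 0 = 0 := by
      rw [conj_entry20 i10 i20 i21 h10 h20 h21, hQ'.2.2.1]; ring
    have hBsplit : B = phiMap l X' + g⁻¹ * Q' * g := by
      rw [hBdef, heq, conj_add]
      unfold psiMap
      rw [conj_cancel₁ hdu]
    have f20 : phiMap l X' 2 0 = phiE l t u v 2 0 := by
      have := congrFun (congrFun hBsplit 2) 0
      rw [Matrix.add_apply, hC'20, add_zero] at this
      rw [e20]; exact this.symm
    have f10 : phiMap l X' 1 0 = phiE l t u v 1 0 := by
      have := congrFun (congrFun hBsplit 1) 0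
      rw [Matrix.add_apply, hC'10, add_zero] at this
      rw [e10]; exact this.symm
    unfold phiMap at f20 f10
    obtain ⟨ht', hu', hv'⟩ := phiE_inj hl f20 f10
    have hX'eq : X' = Xk t z := by
      rw [su2_eq hX', ht', show X' 1 0 = z from Complex.ext (by rw [hu', hzre]) (by rw [hv', hzim])]
    have hQ'eq : Q' = A - psiMap l g (Xk t z) := by
      rw [heq, hX'eq]; abel
    exact Prod.ext (Subtype.ext hX'eq) (Subtype.ext hQ'eq)
  · -- film1
    intro z
    refine ⟨ad_mem hJg hdu (phimem _), ?_⟩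
    show (g * phiMap l (Xk 0 z) * g⁻¹) 2 0 = 0
    rw [conj_entry20 h10 h20 h21 i10 i20 i21, phiMap_Xk, phiE_entry20]
    simp
  · -- complex structure compatibility
    intro z
    show (g * phiMap l (Xk 0 (Jl l z)) * g⁻¹) 1 0
      = Complex.I * (g * phiMap l (Xk 0 z) * g⁻¹) 1 0
    rw [conj_entry10 h10 h20 h21 i10 i20 i21, conj_entry10 h10 h20 h21 i10 i20 i21,
      phiMap_Xk, phiMap_Xk, phiE_entry20, phiE_entry20, phiE_entry10, phiE_entry10]
    have key : (s:ℂ) * ((Jl l z).re:ℂ) + ((1/s : ℝ):ℂ) * (Complex.I * ((Jl l z).im:ℂ))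
        = Complex.I * ((s:ℂ) * (z.re:ℂ) + ((1/s : ℝ):ℂ) * (Complex.I * (z.im:ℂ))) := by
      have hre : (Jl l z).re = -z.im / (s^2) := by rw [← hls]; simp [Jl]
      have him : (Jl l z).im = s^2 * z.re := by rw [← hls]; simp [Jl]
      rw [hre, him, Complex.ext_iff]
      constructor <;>
        simp [-Complex.ofReal_div, -Complex.ofReal_inv, -Complex.ofReal_pow,
          -Complex.ofReal_mul, -Complex.ofReal_sub, -Complex.ofReal_add,
          -Complex.ofReal_neg, -Complex.ofReal_ofNat] <;>
        (field_simp; try ring)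
    rw [key]
    push_cast
    ring
  · -- bracket defect in fil1
    intro X hX Y hY
    rw [br_eq]
    have hXe := su2_eq hX
    have hYe := su2_eq hY
    have hin : phiMap l X * phiMap l Y - phiMap l Y * phiMap l X
        - phiMap l (X * Y - Y * X)
        = phiE l (X 0 0).im (X 1 0).re (X 1 0).im * phiE l (Y 0 0).im (Y 1 0).re (Y 1 0).im
          - phiE l (Y 0 0).im (Y 1 0).re (Y 1 0).im * phiE l (X 0 0).im (X 1 0).re (X 1 0).im
          - phiE l (2*((Y 1 0).re*(X 1 0).im - (X 1 0).re*(Y 1 0).im))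
              (-2*((Y 0 0).im*(X 1 0).im - (X 0 0).im*(Y 1 0).im))
              (2*((Y 0 0).im*(X 1 0).re - (X 0 0).im*(Y 1 0).re)) := by
      conv_lhs => rw [hXe, hYe]
      rw [commφ, phiMap_Xk, phiMap_Xk]
    have hDzero : ∀ i j : Fin 3, j < i ∨ i = j →
        (phiMap l X * phiMap l Y - phiMap l Y * phiMap l X
          - phiMap l (X * Y - Y * X)) i j = 0 := by
      intro i j hij
      rw [hin]
      exact Dlem _ _ _ _ _ _ i j hij
    have hDmem : phiMap l X * phiMap l Y - phiMap l Y * phiMap l X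
        - phiMap l (X * Y - Y * X) ∈ su21 :=
      su21_sub (su21_comm (phimem X) (phimem Y)) (phimem _)
    refine ⟨ad_mem hJg hdu hDmem, ?_, ?_, ?_, ?_, ?_, ?_⟩ <;>
      exact conj_strict_upper h10 h20 h21 i10 i20 i21 hDzero _ _ (by decide)
  · -- H_e exactness
    intro z z'
    rw [br_eq]
    have hin : phiMap l (Xk 0 z) * phiMap l (Xk 0 z')
        - phiMap l (Xk 0 z') * phiMap l (Xk 0 z)
        - phiMap l (Xk 0 z * Xk 0 z' - Xk 0 z' * Xk 0 z) = 0 := by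
      rw [commφ, phiMap_Xk, phiMap_Xk]
      have := He z.re z.im z'.re z'.im
      rw [show (-2*((0:ℝ)*z.im - 0*z'.im)) = 0 by ring,
        show (2*((0:ℝ)*z.re - 0*z'.re)) = 0 by ring]
      rw [sub_eq_zero]
      exact this
    rw [hin]
    simp
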